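/- If A has Spark(A) = L+1 and k ≤ L, then the null space constant for p = 0 equals γ(ℓ_0, A, k) = k/(L+1-k) provided N(A) contains an exactly (L+1)-sparse vector; more precisely, γ(ℓ_0, A, k) ≤ k/(L+1-k) always, and equality is attained by a suitable (L+1)-sparse vector in N(A). -/

import Mathlib

open Finset MeasureTheory Filter

/-- `phi p x = |x|^p`, with the convention `|x|^0 = 1` for `x ≠ 0` and `phi p 0 = 0`. -/
noncomputable def phi (p x : ℝ) : ℝ := if x = 0 then 0 else |x| ^ p

open Classical in
/-- support of a vector, as a finset -/
noncomputable def supp {n : ℕ} (z : Fin n → ℝ) : Finset (Fin n) :=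
  Finset.univ.filter (fun i => z i ≠ 0)

/-- `Spark(A) = s`: some `s` columns are linearly dependent (a kernel vector with support of
size `s`), and every nonzero kernel vector has support of size at least `s`. -/
def sparkEq {m n : ℕ} (A : Matrix (Fin m) (Fin n) ℝ) (s : ℕ) : Prop :=
  (∃ z, A.mulVec z = 0 ∧ z ≠ 0 ∧ (supp z).card = s) ∧
  (∀ z, A.mulVec z = 0 → z ≠ 0 → s ≤ (supp z).card)

/-- The set of constants `γ` satisfying the null space property inequality at level `k`. -/
def validNSC {m n : ℕ} (A : Matrix (Fin m) (Fin n) ℝ) (p : ℝ) (k : ℕ) : Set ℝ :=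
  {γ | ∀ S : Finset (Fin n), S.card ≤ k → ∀ z, A.mulVec z = 0 →
    ∑ i ∈ S, phi p (z i) ≤ γ * ∑ i ∈ Sᶜ, phi p (z i)}

/-- The null space constant `γ(ℓ_p, A, k)`: the smallest valid constant. -/
noncomputable def gammaNSC {m n : ℕ} (A : Matrix (Fin m) (Fin n) ℝ) (p : ℝ) (k : ℕ) : ℝ :=
  sInf (validNSC A p k)

/-- The ratio `θ(p, z, S)`. -/
noncomputable def theta {n : ℕ} (p : ℝ) (z : Fin n → ℝ) (S : Finset (Fin n)) : ℝ :=
  (∑ i ∈ S, phi p (z i)) / (∑ i ∈ Sᶜ, phi p (z i))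


lemma sum_phi_zero {n : ℕ} (z : Fin n → ℝ) (S : Finset (Fin n)) :
    ∑ i ∈ S, phi 0 (z i) = ((S.filter (fun i => z i ≠ 0)).card : ℝ) := by
  classical
  rw [Finset.card_filter]
  push_cast
  apply Finset.sum_congr rfl
  intro i _
  by_cases h : z i = 0 <;> simp [phi, h]

lemma filter_card_compl {n : ℕ} (z : Fin n → ℝ) (S : Finset (Fin n)) :
    (S.filter (fun i => z i ≠ 0)).card + (Sᶜ.filter (fun i => z i ≠ 0)).card
      = (supp z).card := by
  classical
  rw [supp, ← Finset.card_union_of_disjoint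
      (Finset.disjoint_filter_filter disjoint_compl_right),
    ← Finset.filter_union, Finset.union_compl]

/-- for p = 0 and k ≤ L, γ(ℓ_0, A, k) = k / (L + 1 - k). -/
theorem stmt3 {M N L : ℕ} (A : Matrix (Fin M) (Fin N) ℝ) (hspark : sparkEq A (L + 1))
    (k : ℕ) (hk : k ≤ L) :
    gammaNSC A 0 k = (k : ℝ) / ((L : ℝ) + 1 - (k : ℝ)) := by
  classical
  have hkL : (k:ℝ) ≤ L := by exact_mod_cast hk
  have hLk : (0:ℝ) < (L:ℝ) + 1 - k := by linarith
  set γ0 : ℝ := (k:ℝ) / ((L:ℝ) + 1 - (k:ℝ)) with hγ0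
  have hγ0nonneg : 0 ≤ γ0 := div_nonneg (Nat.cast_nonneg k) hLk.le
  have hmem : γ0 ∈ validNSC A 0 k := by
    intro S hS z hz
    rw [sum_phi_zero, sum_phi_zero]
    by_cases hz0 : z = 0
    · subst hz0; simp
    · have ht := hspark.2 z hz hz0
      have hab := filter_card_compl z S
      set a := (S.filter (fun i => z i ≠ 0)).card with ha'
      set b := (Sᶜ.filter (fun i => z i ≠ 0)).card with hb'
      have ha : a ≤ k := le_trans (Finset.card_filter_le _ _) hS
      have habR : (L:ℝ) + 1 ≤ (a:ℝ) + b := by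
        have : L + 1 ≤ a + b := by omega
        exact_mod_cast this
      have haR : (a:ℝ) ≤ k := by exact_mod_cast ha
      rw [hγ0, div_mul_eq_mul_div, le_div_iff₀ hLk]
      nlinarith [Nat.cast_nonneg (α := ℝ) b, Nat.cast_nonneg (α := ℝ) a,
        mul_nonneg (sub_nonneg.mpr haR) (by linarith : (0:ℝ) ≤ (L:ℝ) + 1)]
  have hlow : ∀ γ ∈ validNSC A 0 k, γ0 ≤ γ := by
    intro γ hγ
    obtain ⟨z, hz, hz0, hcard⟩ := hspark.1
    have hksub : k ≤ (supp z).card := by omega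
    obtain ⟨S, hSsub, hScard⟩ := Finset.exists_subset_card_eq hksub
    have key := hγ S (le_of_eq hScard) z hz
    rw [sum_phi_zero, sum_phi_zero] at key
    have h1 : S.filter (fun i => z i ≠ 0) = S := by
      apply Finset.filter_true_of_mem
      intro i hi
      have := hSsub hi
      simpa [supp] using this
    have h2 : (Sᶜ.filter (fun i => z i ≠ 0)).card = L + 1 - k := by
      have h3 := filter_card_compl z S
      rw [h1, hScard, hcard] at h3
      omega
    rw [h1, hScard, h2] at key
    have hc : ((L + 1 - k : ℕ):ℝ) = (L:ℝ) + 1 - k := by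
      have hk1 : k ≤ L + 1 := by omega
      push_cast [Nat.cast_sub hk1]
      ring
    rw [hc] at key
    rw [hγ0, div_le_iff₀ hLk]
    linarith
  exact le_antisymm (csInf_le ⟨γ0, fun x hx => hlow x hx⟩ hmem) (le_csInf ⟨γ0, hmem⟩ hlow)
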